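/- An element (γ, s, t) with γ = (γ₁ ≥ γ₂ ≥ 0) ∈ ℝ² and s, t ∈ ℝ, s ≥ 0, t ≥ 0, belongs to T(1,1) if and only if γ₁ − γ₂ ≥ |s − t| and γ₁ + γ₂ ≥ s + t. -/

import Mathlib

open Matrix

/-- Eigenvalues of a (Hermitian) complex matrix, listed in decreasing order. -/
noncomputable def eigVec {k : ℕ} (X : Matrix (Fin k) (Fin k) ℂ) (hX : X.IsHermitian) :
    Fin k → ℝ :=
  fun i => hX.eigenvalues (Tuple.sort hX.eigenvalues i.rev)

/-- The `i`-th (0-based) singular value of a rectangular complex matrix: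
the square root of the `i`-th largest eigenvalue of `Y * Yᴴ` (and `0` for `i ≥ a`). -/
noncomputable def sval {a b : ℕ} (Y : Matrix (Fin a) (Fin b) ℂ) (i : ℕ) : ℝ :=
  if h : i < a then
    Real.sqrt (eigVec (Y * Yᴴ) (Matrix.isHermitian_mul_conjTranspose_self Y) ⟨i, h⟩)
  else 0

/-- The Horn cone `Horn(k)`. -/
def Horn (k : ℕ) : Set ((Fin k → ℝ) × (Fin k → ℝ) × (Fin k → ℝ)) :=
  { v | ∃ (X Y : Matrix (Fin k) (Fin k) ℂ) (hX : X.IsHermitian) (hY : Y.IsHermitian),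
      v.1 = eigVec X hX ∧ v.2.1 = eigVec Y hY ∧ v.2.2 = eigVec (X + Y) (hX.add hY) }

/-- The Littlewood–Richardson cone `LR(m,n)`. -/
def LRcone (m n : ℕ) : Set ((Fin (m + n) → ℝ) × (Fin m → ℝ) × (Fin n → ℝ)) :=
  { v | ∃ (M : Matrix (Fin (m + n)) (Fin (m + n)) ℂ) (hM : M.IsHermitian),
      v.1 = eigVec M hM ∧
      v.2.1 = eigVec (M.submatrix (Fin.castAdd n) (Fin.castAdd n))
        (hM.submatrix (Fin.castAdd n)) ∧
      v.2.2 = eigVec (M.submatrix (Fin.natAdd m) (Fin.natAdd m))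
        (hM.submatrix (Fin.natAdd m)) }

/-- Top-left `p × p` block. -/
def blockTL (p q : ℕ) (X : Matrix (Fin (p + q)) (Fin (p + q)) ℂ) : Matrix (Fin p) (Fin p) ℂ :=
  X.submatrix (Fin.castAdd q) (Fin.castAdd q)

/-- Top-right `p × q` block. -/
def blockTR (p q : ℕ) (X : Matrix (Fin (p + q)) (Fin (p + q)) ℂ) : Matrix (Fin p) (Fin q) ℂ :=
  X.submatrix (Fin.castAdd q) (Fin.natAdd p)

/-- Bottom-left `q × p` block. -/
def blockBL (p q : ℕ) (X : Matrix (Fin (p + q)) (Fin (p + q)) ℂ) : Matrix (Fin q) (Fin p) ℂ :=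
  X.submatrix (Fin.natAdd p) (Fin.castAdd q)

/-- Bottom-right `q × q` block. -/
def blockBR (p q : ℕ) (X : Matrix (Fin (p + q)) (Fin (p + q)) ℂ) : Matrix (Fin q) (Fin q) ℂ :=
  X.submatrix (Fin.natAdd p) (Fin.natAdd p)

/-- `λ* = (−λ_k, …, −λ_1)`. -/
def starVec {k : ℕ} (x : Fin k → ℝ) : Fin k → ℝ := fun i => -x i.rev

/-- `ŝ^{p,q} = (s₁, …, s_q, 0, …, 0, −s_q, …, −s₁) ∈ ℝ^{p+q}` (with `p − q` middle zeros). -/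
noncomputable def hatPQ (p q : ℕ) (s : Fin q → ℝ) : Fin (p + q) → ℝ :=
  fun i =>
    if h : (i : ℕ) < q then s ⟨i, h⟩
    else if h' : (i : ℕ) < p then 0
    else -s ⟨p + q - 1 - i, by have := i.isLt; omega⟩

/-- The cone `A(p,q)`: pairs `(e(X), s(X₁₂))` for `X` Hermitian of size `p+q`. -/
def coneA (p q : ℕ) : Set ((Fin (p + q) → ℝ) × (Fin q → ℝ)) :=
  { v | ∃ (X : Matrix (Fin (p + q)) (Fin (p + q)) ℂ) (hX : X.IsHermitian),
      v.1 = eigVec X hX ∧ ∀ i : Fin q, v.2 i = sval (blockTR p q X) (i : ℕ) }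

/-- The cone `S(p,q)`: triples `(s(X), s(X₁₂), s(X₂₁))`. -/
def coneS (p q : ℕ) : Set ((Fin (p + q) → ℝ) × (Fin q → ℝ) × (Fin q → ℝ)) :=
  { v | ∃ X : Matrix (Fin (p + q)) (Fin (p + q)) ℂ,
      (∀ i : Fin (p + q), v.1 i = sval X (i : ℕ)) ∧
      (∀ i : Fin q, v.2.1 i = sval (blockTR p q X) (i : ℕ)) ∧
      (∀ i : Fin q, v.2.2 i = sval (blockBL p q X) (i : ℕ)) }

/-- The cone `T(p,q)`: triples `(s(X), s(X₁₁), s(X₂₂))`. -/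
def coneT (p q : ℕ) : Set ((Fin (p + q) → ℝ) × (Fin p → ℝ) × (Fin q → ℝ)) :=
  { v | ∃ X : Matrix (Fin (p + q)) (Fin (p + q)) ℂ,
      (∀ i : Fin (p + q), v.1 i = sval X (i : ℕ)) ∧
      (∀ i : Fin p, v.2.1 i = sval (blockTL p q X) (i : ℕ)) ∧
      (∀ i : Fin q, v.2.2 i = sval (blockBR p q X) (i : ℕ)) }

/-- `μ(A) = (a_r − r ≥ … ≥ a₂ − 2 ≥ a₁ − 1)` as a decreasing real vector, for
`A = {a₁ < … < a_r}` a subset of `[n]` (0-based indexing internally). -/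
noncomputable def muVec {n r : ℕ} (A : Finset (Fin n)) (h : A.card = r) : Fin r → ℝ :=
  fun k => (((A.orderIsoOfFin h k.rev : Fin n) : ℕ) : ℝ) - ((k.rev : ℕ) : ℝ)

/-- `A^o = {ℓ + 1 − a : a ∈ A}` inside `[ℓ]`. -/
def opp {n : ℕ} (A : Finset (Fin n)) : Finset (Fin n) := A.image Fin.rev

/-- `|s|_{K ∩ [q]}` where `K ⊆ [n]`, `s ∈ ℝ^q` and `[q]` is viewed inside `[n]`. -/
noncomputable def sumRestr {n q : ℕ} (s : Fin q → ℝ) (K : Finset (Fin n)) : ℝ :=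
  ∑ i ∈ K, (if h : (i : ℕ) < q then s ⟨i, h⟩ else 0)

/-- The augmented matrix `Ŷ^{p,q} = [[0, Y], [Yᴴ, 0]]` of size `p + q`. -/
def hatM (p q : ℕ) (Y : Matrix (Fin p) (Fin q) ℂ) : Matrix (Fin (p + q)) (Fin (p + q)) ℂ :=
  Matrix.reindex finSumFinEquiv finSumFinEquiv (Matrix.fromBlocks 0 Y Yᴴ 0)


section Helpers

lemma trace_eq_sum_eig {n : Type*} [Fintype n] [DecidableEq n] {A : Matrix n n ℂ}
    (hA : A.IsHermitian) : A.trace = ∑ i, (hA.eigenvalues i : ℂ) := by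
  exact hA.trace_eq_sum_eigenvalues

lemma eigVec_anti {k : ℕ} (X : Matrix (Fin k) (Fin k) ℂ) (hX : X.IsHermitian) :
    Antitone (eigVec X hX) := fun _ _ hij =>
  Tuple.monotone_sort hX.eigenvalues (Fin.rev_le_rev.mpr hij)

lemma eigVec_sum {k : ℕ} (X : Matrix (Fin k) (Fin k) ℂ) (hX : X.IsHermitian) :
    ∑ i, eigVec X hX i = X.trace.re := by
  have h := Equiv.sum_comp ((Fin.revPerm).trans (Tuple.sort hX.eigenvalues)) hX.eigenvalues
  have ht := trace_eq_sum_eig hX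
  have : X.trace.re = ∑ i, hX.eigenvalues i := by rw [ht]; simp
  rw [this, ← h]; rfl

lemma eigVec_prod {k : ℕ} (X : Matrix (Fin k) (Fin k) ℂ) (hX : X.IsHermitian) :
    ((∏ i, eigVec X hX i : ℝ) : ℂ) = X.det := by
  have h := Equiv.prod_comp ((Fin.revPerm).trans (Tuple.sort hX.eigenvalues)) hX.eigenvalues
  have : ∏ i, eigVec X hX i = ∏ i, hX.eigenvalues i := h
  rw [this, hX.det_eq_prod_eigenvalues]; push_cast; rfl

lemma eigVec_nonneg {k : ℕ} (X : Matrix (Fin k) (Fin k) ℂ) (hX : (X * Xᴴ).IsHermitian)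
    (i : Fin k) : 0 ≤ eigVec (X * Xᴴ) hX i :=
  Matrix.eigenvalues_self_mul_conjTranspose_nonneg X _

lemma sval_one (Y : Matrix (Fin 1) (Fin 1) ℂ) : sval Y 0 = ‖Y 0 0‖ := by
  have hA := Matrix.isHermitian_mul_conjTranspose_self Y
  have h1 : eigVec (Y * Yᴴ) hA 0 = Complex.normSq (Y 0 0) := by
    have hs := eigVec_sum (Y * Yᴴ) hA
    have htr : (Y * Yᴴ).trace = (Complex.normSq (Y 0 0) : ℂ) := by
      simp [Matrix.trace, Matrix.diag, Matrix.mul_apply, Matrix.conjTranspose_apply,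
        Complex.mul_conj]
    rw [htr] at hs
    simpa using hs
  have : sval Y 0 = Real.sqrt (eigVec (Y * Yᴴ) hA 0) := by
    rw [sval, dif_pos (by norm_num : (0:ℕ) < 1)]; rfl
  rw [this, h1, ← Complex.norm_def]

lemma sval_two (X : Matrix (Fin 2) (Fin 2) ℂ) :
    0 ≤ sval X 1 ∧ sval X 1 ≤ sval X 0 ∧
      (sval X 0)^2 + (sval X 1)^2 = ((X * Xᴴ).trace).re ∧
      sval X 0 * sval X 1 = ‖X.det‖ := by
  have hA := Matrix.isHermitian_mul_conjTranspose_self X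
  have e0 : sval X 0 = Real.sqrt (eigVec (X * Xᴴ) hA 0) := by
    rw [sval, dif_pos (by norm_num : (0:ℕ) < 2)]; rfl
  have e1 : sval X 1 = Real.sqrt (eigVec (X * Xᴴ) hA 1) := by
    rw [sval, dif_pos (by norm_num : (1:ℕ) < 2)]; rfl
  have hn0 := eigVec_nonneg X hA 0
  have hn1 := eigVec_nonneg X hA 1
  have hle := eigVec_anti (X * Xᴴ) hA (show (0:Fin 2) ≤ 1 by decide)
  have hsum : eigVec (X * Xᴴ) hA 0 + eigVec (X * Xᴴ) hA 1 = ((X * Xᴴ).trace).re := by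
    have := eigVec_sum (X * Xᴴ) hA; rwa [Fin.sum_univ_two] at this
  have hprod : eigVec (X * Xᴴ) hA 0 * eigVec (X * Xᴴ) hA 1 = Complex.normSq X.det := by
    have hp := eigVec_prod (X * Xᴴ) hA
    rw [Fin.prod_univ_two] at hp
    have hdet : (X * Xᴴ).det = (Complex.normSq X.det : ℂ) := by
      rw [Matrix.det_mul, Matrix.det_conjTranspose]; simp [Complex.star_def, Complex.mul_conj]
    rw [hdet] at hp
    exact_mod_cast hp
  refine ⟨by rw [e1]; positivity, ?_, ?_, ?_⟩
  · rw [e0, e1]; exact Real.sqrt_le_sqrt hle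
  · rw [e0, e1, Real.sq_sqrt hn0, Real.sq_sqrt hn1, hsum]
  · rw [e0, e1, ← Real.sqrt_mul hn0, hprod, ← Complex.norm_def]

lemma sval_two_eq (X : Matrix (Fin 2) (Fin 2) ℂ) (c1 c2 : ℝ) (h2 : 0 ≤ c2) (h12 : c2 ≤ c1)
    (hT : c1^2 + c2^2 = ((X * Xᴴ).trace).re) (hD : c1 * c2 = ‖X.det‖) :
    sval X 0 = c1 ∧ sval X 1 = c2 := by
  obtain ⟨hb0, hba, hsum, hprod⟩ := sval_two X
  set a := sval X 0 with ha'
  set b := sval X 1 with hb'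
  have ha0 : 0 ≤ a := le_trans hb0 hba
  have hs : a + b = c1 + c2 := by
    have hsq : (a + b)^2 = (c1 + c2)^2 := by nlinarith
    exact le_antisymm (by nlinarith) (by nlinarith)
  have hd : a - b = c1 - c2 := by
    have hsq : (a - b)^2 = (c1 - c2)^2 := by nlinarith
    exact le_antisymm (by nlinarith) (by nlinarith)
  constructor <;> linarith

lemma trace_re_two (X : Matrix (Fin 2) (Fin 2) ℂ) :
    ((X * Xᴴ).trace).re = Complex.normSq (X 0 0) + Complex.normSq (X 0 1)
      + Complex.normSq (X 1 0) + Complex.normSq (X 1 1) := by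
  have : (X * Xᴴ).trace = ((Complex.normSq (X 0 0) + Complex.normSq (X 0 1)
      + Complex.normSq (X 1 0) + Complex.normSq (X 1 1) : ℝ) : ℂ) := by
    simp [Matrix.trace, Matrix.diag, Matrix.mul_apply, Matrix.conjTranspose_apply,
      Fin.sum_univ_two, Complex.mul_conj]
    push_cast
    ring
  rw [this, Complex.ofReal_re]

end Helpers

set_option maxHeartbeats 2000000 in
theorem stmt_14 (g : Fin (1 + 1) → ℝ) (s t : ℝ)
    (hg : g 0 ≥ g 1) (hg0 : g 1 ≥ 0) (hs : s ≥ 0) (ht : t ≥ 0) :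
    (g, fun _ : Fin 1 => s, fun _ : Fin 1 => t) ∈ coneT 1 1 ↔
      (g 0 - g 1 ≥ |s - t| ∧ g 0 + g 1 ≥ s + t) := by
  constructor
  · rintro ⟨X, h1, h2, h3⟩
    have hTL : (Fin.castAdd 1 (0 : Fin 1)) = (0 : Fin (1+1)) := rfl
    have hBR : (Fin.natAdd 1 (0 : Fin 1)) = (1 : Fin (1+1)) := rfl
    have hsX : s = ‖X 0 0‖ := by
      have h := h2 0
      simp only [Fin.val_zero] at h
      rw [sval_one] at h
      simpa [blockTL, hTL] using h
    have htX : t = ‖X 1 1‖ := by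
      have h := h3 0
      simp only [Fin.val_zero] at h
      rw [sval_one] at h
      simpa [blockBR, hBR] using h
    have hg0' : g 0 = sval X 0 := h1 0
    have hg1' : g 1 = sval X 1 := h1 1
    obtain ⟨_, _, hsum, hprod⟩ := sval_two X
    rw [← hg0', ← hg1'] at hsum hprod
    rw [trace_re_two] at hsum
    set a := ‖X 0 0‖
    set b := ‖X 0 1‖
    set c := ‖X 1 0‖
    set d := ‖X 1 1‖
    have hna : Complex.normSq (X 0 0) = a^2 := (Complex.sq_norm _).symm
    have hnb : Complex.normSq (X 0 1) = b^2 := (Complex.sq_norm _).symm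
    have hnc : Complex.normSq (X 1 0) = c^2 := (Complex.sq_norm _).symm
    have hnd : Complex.normSq (X 1 1) = d^2 := (Complex.sq_norm _).symm
    rw [hna, hnb, hnc, hnd] at hsum
    have ha0 : 0 ≤ a := norm_nonneg _
    have hb0 : 0 ≤ b := norm_nonneg _
    have hc0 : 0 ≤ c := norm_nonneg _
    have hd0 : 0 ≤ d := norm_nonneg _
    have hdet : X.det = X 0 0 * X 1 1 - X 0 1 * X 1 0 := Matrix.det_fin_two X
    have hub : ‖X.det‖ ≤ a * d + b * c := by
      rw [hdet]
      calc ‖X 0 0 * X 1 1 - X 0 1 * X 1 0‖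
          ≤ ‖X 0 0 * X 1 1‖ + ‖X 0 1 * X 1 0‖ := by
            simpa [sub_eq_add_neg] using norm_add_le (X 0 0 * X 1 1) (-(X 0 1 * X 1 0))
        _ = a * d + b * c := by rw [norm_mul, norm_mul]
    have hlb : a * d - b * c ≤ ‖X.det‖ := by
      rw [hdet]
      have := norm_sub_norm_le (X 0 0 * X 1 1) (X 0 1 * X 1 0)
      rwa [norm_mul, norm_mul] at this
    rw [hsX, htX]
    have hgd : (0:ℝ) ≤ g 0 - g 1 := by linarith
    constructor
    · rw [ge_iff_le, abs_sub_le_iff]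
      constructor
      · nlinarith [sq_nonneg (b - c), sq_nonneg (g 0 - g 1 + a - d)]
      · nlinarith [sq_nonneg (b - c), sq_nonneg (g 0 - g 1 + d - a)]
    · nlinarith [sq_nonneg (b - c), sq_nonneg (g 0 + g 1 + a + d)]
  · rintro ⟨hdiff, hsum⟩
    set P := Real.sqrt ((g 0 + g 1)^2 - (s + t)^2) with hP
    set Q := Real.sqrt ((g 0 - g 1)^2 - (s - t)^2) with hQ
    have habs : |s - t| ^ 2 = (s - t)^2 := sq_abs _
    have hP2 : P^2 = (g 0 + g 1)^2 - (s + t)^2 := by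
      apply Real.sq_sqrt; nlinarith
    have hQ2 : Q^2 = (g 0 - g 1)^2 - (s - t)^2 := by
      apply Real.sq_sqrt
      nlinarith [abs_nonneg (s - t), le_abs_self (s - t), neg_abs_le (s - t)]
    set b := (P + Q) / 2 with hb
    set c := (P - Q) / 2 with hc
    have hb2 : b * b + c * c = (P^2 + Q^2) / 2 := by rw [hb, hc]; ring
    have hbc2 : b * c = (P^2 - Q^2) / 4 := by rw [hb, hc]; ring
    refine ⟨!![(s : ℂ), (b : ℂ); (-(c : ℂ)), (t : ℂ)], ?_, ?_, ?_⟩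
    · set X : Matrix (Fin 2) (Fin 2) ℂ := !![(s : ℂ), (b : ℂ); (-(c : ℂ)), (t : ℂ)] with hX
      have hT : (g 0)^2 + (g 1)^2 = ((X * Xᴴ).trace).re := by
        rw [trace_re_two]
        have e00 : X 0 0 = (s : ℂ) := rfl
        have e01 : X 0 1 = (b : ℂ) := rfl
        have e10 : X 1 0 = -(c : ℂ) := rfl
        have e11 : X 1 1 = (t : ℂ) := rfl
        rw [e00, e01, e10, e11]
        simp only [Complex.normSq_ofReal, map_neg, Complex.normSq_neg]
        linear_combination -hb2 - hP2/2 - hQ2/2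
      have hD : g 0 * g 1 = ‖X.det‖ := by
        have hdet : X.det = ((s * t + b * c : ℝ) : ℂ) := by
          rw [Matrix.det_fin_two]
          have e00 : X 0 0 = (s : ℂ) := rfl
          have e01 : X 0 1 = (b : ℂ) := rfl
          have e10 : X 1 0 = -(c : ℂ) := rfl
          have e11 : X 1 1 = (t : ℂ) := rfl
          rw [e00, e01, e10, e11]; push_cast; ring
        have hbc : s * t + b * c = g 0 * g 1 := by linear_combination hbc2 + hP2/4 - hQ2/4
        rw [hdet, Complex.norm_real, Real.norm_eq_abs, hbc, abs_of_nonneg (mul_nonneg (le_trans hg0 hg) hg0)]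
      obtain ⟨hv0, hv1⟩ := sval_two_eq X (g 0) (g 1) hg0 hg hT hD
      intro i
      fin_cases i
      · exact hv0.symm
      · exact hv1.symm
    · intro i
      have : i = 0 := Subsingleton.elim _ _
      subst this
      simp only [Fin.val_zero]
      rw [sval_one]
      show s = ‖(!![(s : ℂ), (b : ℂ); (-(c : ℂ)), (t : ℂ)] : Matrix (Fin 2) (Fin 2) ℂ) 0 0‖
      rw [show (!![(s : ℂ), (b : ℂ); (-(c : ℂ)), (t : ℂ)] : Matrix (Fin 2) (Fin 2) ℂ) 0 0 = (s : ℂ) from rfl,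
        Complex.norm_real, Real.norm_eq_abs, abs_of_nonneg hs]
    · intro i
      have : i = 0 := Subsingleton.elim _ _
      subst this
      simp only [Fin.val_zero]
      rw [sval_one]
      show t = ‖(!![(s : ℂ), (b : ℂ); (-(c : ℂ)), (t : ℂ)] : Matrix (Fin 2) (Fin 2) ℂ) 1 1‖
      rw [show (!![(s : ℂ), (b : ℂ); (-(c : ℂ)), (t : ℂ)] : Matrix (Fin 2) (Fin 2) ℂ) 1 1 = (t : ℂ) from rfl,
        Complex.norm_real, Real.norm_eq_abs, abs_of_nonneg ht]
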